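/- (Solovay splitting) Every stationary subset S of a regular uncountable cardinal κ can be split into κ pairwise disjoint stationary subsets; equivalently, NS_κ ↾ S is not κ-saturated. -/

import Mathlib

open Ordinal Set Cardinal

/-- `C` is a club (closed unbounded) subset of the ordinal `κ`. -/
def IsClubIn (C : Set Ordinal) (κ : Ordinal) : Prop :=
  C ⊆ Set.Iio κ ∧ (∀ β < κ, ∃ γ ∈ C, β < γ) ∧
    (∀ α < κ, α ≠ 0 → (∀ β < α, ∃ γ ∈ C, β < γ ∧ γ < α) → α ∈ C)

/-- `S` is stationary in `κ`: it meets every club of `κ`. -/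
def IsStationaryIn (S : Set Ordinal) (κ : Ordinal) : Prop :=
  ∀ C, IsClubIn C κ → (S ∩ C).Nonempty




namespace Solovay

noncomputable section

open Classical

/-- The set of limit points of `C` below `K`. -/
def accIn (C : Set Ordinal) (K : Ordinal) : Set Ordinal :=
  {a | a < K ∧ a ≠ 0 ∧ ∀ b < a, ∃ γ ∈ C, b < γ ∧ γ < a}

theorem omega_limit {K : Ordinal.{0}} (hcof : ℵ₀ < K.cof) (g : Ordinal → Ordinal)
    (hg : ∀ x, x < K → x < g x ∧ g x < K) {β : Ordinal} (hβ : β < K) :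
    ∃ α, α < K ∧ β < α ∧ (∀ n : ℕ, g^[n] β < α) ∧ ∀ x, x < α → ∃ n : ℕ, x < g^[n] β := by
  have hK : ∀ n : ℕ, g^[n] β < K := by
    intro n
    induction n with
    | zero => simpa using hβ
    | succ n ih => rw [Function.iterate_succ_apply']; exact (hg _ ih).2
  have hmono : ∀ n : ℕ, g^[n] β < g^[n + 1] β := by
    intro n; rw [Function.iterate_succ_apply']; exact (hg _ (hK n)).1
  refine ⟨⨆ n : ℕ, g^[n] β, ?_, ?_, fun n => ?_, fun x hx => ?_⟩
  · exact Ordinal.iSup_lt_ord (by rwa [Cardinal.mk_nat]) hK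
  · calc β = g^[0] β := rfl
      _ < g^[1] β := hmono 0
      _ ≤ _ := Ordinal.le_iSup _ 1
  · exact (hmono n).trans_le (Ordinal.le_iSup _ (n + 1))
  · exact Ordinal.lt_iSup_iff.1 hx

theorem isClubIn_Iio {K : Ordinal} (hK : Order.IsSuccLimit K) : IsClubIn (Set.Iio K) K :=
  ⟨subset_rfl, fun b hb => ⟨Order.succ b, hK.succ_lt hb, Order.lt_succ b⟩,
    fun α hα _ _ => hα⟩

theorem isClubIn_iInter {K : Ordinal.{0}} {ι : Type} [Nonempty ι] (hι : #ι < K.cof)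
    (hcof : ℵ₀ < K.cof) {C : ι → Set Ordinal} (h : ∀ i, IsClubIn (C i) K) :
    IsClubIn (⋂ i, C i) K := by
  have hKlim : Order.IsSuccLimit K := Ordinal.aleph0_le_cof.1 hcof.le
  set pick : ι → Ordinal → Ordinal := fun i x =>
    if hx : x < K then ((h i).2.1 x hx).choose else 0 with hpick
  have hpick1 : ∀ i x, x < K → pick i x ∈ C i ∧ x < pick i x := by
    intro i x hx
    rw [hpick]; simp only [dif_pos hx]
    obtain ⟨h1, h2⟩ := ((h i).2.1 x hx).choose_spec
    exact ⟨h1, h2⟩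
  set g : Ordinal → Ordinal := fun x => (⨆ i, pick i x) + 1 with hgdef
  have hpickK : ∀ i x, x < K → pick i x < K := fun i x hx => (h i).1 (hpick1 i x hx).1
  have hg : ∀ x, x < K → x < g x ∧ g x < K := by
    intro x hx
    have hsup : (⨆ i, pick i x) < K := Ordinal.iSup_lt_ord hι (fun i => hpickK i x hx)
    constructor
    · calc x < pick (Classical.arbitrary ι) x := (hpick1 _ x hx).2
        _ ≤ ⨆ i, pick i x := Ordinal.le_iSup _ _
        _ < g x := by rw [hgdef]; exact lt_add_one _
    · rw [hgdef]
      simpa [← Ordinal.add_one_eq_succ] using hKlim.succ_lt hsup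
  refine ⟨fun x hx => (h (Classical.arbitrary ι)).1 (mem_iInter.1 hx _), ?_, ?_⟩
  · intro β hβ
    obtain ⟨α, hαK, hβα, hiter, hcofin⟩ := omega_limit hcof g hg hβ
    refine ⟨α, ?_, hβα⟩
    refine mem_iInter.2 fun i => (h i).2.2 α hαK (((zero_le (a := β)).trans_lt hβα).ne') ?_
    intro b hb
    obtain ⟨n, hn⟩ := hcofin b hb
    have hyK : g^[n] β < K := (hiter n).trans hαK
    refine ⟨pick i (g^[n] β), (hpick1 i _ hyK).1, hn.trans (hpick1 i _ hyK).2, ?_⟩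
    calc pick i (g^[n] β) ≤ ⨆ j, pick j (g^[n] β) := Ordinal.le_iSup _ _
      _ < g (g^[n] β) := by rw [hgdef]; exact lt_add_one _
      _ = g^[n + 1] β := (Function.iterate_succ_apply' g n β).symm
      _ < α := hiter (n + 1)
  · intro α hαK hα0 hcl
    refine mem_iInter.2 fun i => (h i).2.2 α hαK hα0 fun b hb => ?_
    obtain ⟨γ, hγ, hbγ, hγα⟩ := hcl b hb
    exact ⟨γ, mem_iInter.1 hγ i, hbγ, hγα⟩

theorem isClubIn_inter {K : Ordinal.{0}} (hcof : ℵ₀ < K.cof) {C D : Set Ordinal}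
    (hC : IsClubIn C K) (hD : IsClubIn D K) : IsClubIn (C ∩ D) K := by
  have h := isClubIn_iInter (ι := Bool) (K := K)
    ((Cardinal.lt_aleph0_of_finite Bool).trans hcof) hcof
    (C := fun b => bif b then C else D) (by rintro (_ | _) <;> simpa)
  have he : (⋂ b : Bool, (bif b then C else D)) = C ∩ D := by
    ext x; simp [Bool.forall_bool, and_comm]
  rwa [he] at h

theorem isClubIn_Ioi_Iio {K : Ordinal} (hK : Order.IsSuccLimit K) {β : Ordinal} (hβ : β < K) :
    IsClubIn (Set.Ioi β ∩ Set.Iio K) K := by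
  refine ⟨fun x hx => hx.2, ?_, ?_⟩
  · intro b hb
    refine ⟨Order.succ (max β b), ⟨?_, hK.succ_lt (max_lt hβ hb)⟩, ?_⟩
    · exact (le_max_left β b).trans_lt (Order.lt_succ _)
    · exact (le_max_right β b).trans_lt (Order.lt_succ _)
  · intro α hαK hα0 hcl
    obtain ⟨γ, hγ, _, hγα⟩ := hcl 0 (pos_iff_ne_zero.2 hα0)
    exact ⟨hγ.1.trans hγα, hαK⟩



theorem isClubIn_lim {κ : Cardinal.{0}} (hκ : κ.IsRegular) (hκω : ℵ₀ < κ) :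
    IsClubIn ({a | Order.IsSuccLimit a} ∩ Set.Iio κ.ord) κ.ord := by
  have hKlim : Order.IsSuccLimit κ.ord := Cardinal.isSuccLimit_ord hκ.aleph0_le
  refine ⟨fun x hx => hx.2, ?_, ?_⟩
  · intro b hb
    refine ⟨b + ω, ⟨Ordinal.isSuccLimit_add b Ordinal.isSuccLimit_omega0, ?_⟩, ?_⟩
    · rw [Set.mem_Iio, Cardinal.lt_ord, Ordinal.card_add, Ordinal.card_omega0]
      exact Cardinal.add_lt_of_lt hκ.aleph0_le (Cardinal.lt_ord.1 hb) hκω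
    · simpa using add_lt_add_left Ordinal.omega0_pos b
  · intro α hαK hα0 hcl
    refine ⟨Ordinal.isSuccLimit_iff.2 ⟨hα0, Order.isSuccPrelimit_iff_succ_lt.2 fun a ha => ?_⟩, hαK⟩
    obtain ⟨γ, hγ, haγ, hγα⟩ := hcl a ha
    exact lt_of_le_of_lt (Order.succ_le_of_lt haγ) hγα

theorem isClubIn_diag {κ : Cardinal.{0}} (hκ : κ.IsRegular) (hκω : ℵ₀ < κ)
    {C : Ordinal → Set Ordinal} (h : ∀ ξ < κ.ord, IsClubIn (C ξ) κ.ord) :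
    IsClubIn {α | α < κ.ord ∧ ∀ ξ < α, α ∈ C ξ} κ.ord := by
  set K := κ.ord with hKdef
  have hcof : ℵ₀ < K.cof := by rw [hKdef, hκ.cof_eq]; exact hκω
  have hKlim : Order.IsSuccLimit K := Cardinal.isSuccLimit_ord hκ.aleph0_le
  have hcard : ∀ x, x < K → x.card < K.cof := by
    intro x hx; rw [hKdef, hκ.cof_eq]; exact Cardinal.lt_ord.1 hx
  set pick : Ordinal → Ordinal → Ordinal := fun ξ x =>
    if hx : ξ < K ∧ x < K then ((h ξ hx.1).2.1 x hx.2).choose else 0 with hpick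
  have hpick1 : ∀ ξ x, ξ < K → x < K → pick ξ x ∈ C ξ ∧ x < pick ξ x := by
    intro ξ x hξ hx
    rw [hpick]; simp only [dif_pos (And.intro hξ hx)]
    obtain ⟨h1, h2⟩ := ((h ξ hξ).2.1 x hx).choose_spec
    exact ⟨h1, h2⟩
  set g : Ordinal → Ordinal :=
    fun x => (max x (Ordinal.bsup x (fun ξ _ => pick ξ x))) + 1 with hgdef
  have hg : ∀ x, x < K → x < g x ∧ g x < K := by
    intro x hx
    have hbsup : Ordinal.bsup x (fun ξ _ => pick ξ x) < K :=
      Ordinal.bsup_lt_ord (hcard x hx)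
        (fun ξ hξ => (h ξ (hξ.trans hx)).1 (hpick1 ξ x (hξ.trans hx) hx).1)
    constructor
    · exact (le_max_left _ _).trans_lt (lt_add_one _)
    · rw [hgdef]
      simpa [← Ordinal.add_one_eq_succ] using hKlim.succ_lt (max_lt hx hbsup)
  have hpick_le : ∀ ξ x, ξ < x → x < K → pick ξ x < g x := by
    intro ξ x hξx hx
    calc pick ξ x ≤ Ordinal.bsup x (fun ζ _ => pick ζ x) := Ordinal.le_bsup _ ξ hξx
      _ ≤ max x _ := le_max_right _ _
      _ < g x := lt_add_one _
  refine ⟨fun x hx => hx.1, ?_, ?_⟩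
  · intro β hβ
    obtain ⟨α, hαK, hβα, hiter, hcofin⟩ := omega_limit hcof g hg hβ
    refine ⟨α, ⟨hαK, fun ξ hξα => ?_⟩, hβα⟩
    have hξK : ξ < K := hξα.trans hαK
    refine (h ξ hξK).2.2 α hαK (((zero_le (a := β)).trans_lt hβα).ne') ?_
    intro b hb
    obtain ⟨n, hn⟩ := hcofin (max b ξ) (max_lt hb hξα)
    set y := g^[n] β with hy
    have hyK : y < K := (hiter n).trans hαK
    have hξy : ξ < y := (le_max_right b ξ).trans_lt hn
    refine ⟨pick ξ y, (hpick1 ξ y hξK hyK).1,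
      ((le_max_left b ξ).trans_lt hn).trans (hpick1 ξ y hξK hyK).2, ?_⟩
    calc pick ξ y < g y := hpick_le ξ y hξy hyK
      _ = g^[n + 1] β := (Function.iterate_succ_apply' g n β).symm
      _ < α := hiter (n + 1)
  · intro α hαK hα0 hcl
    refine ⟨hαK, fun ξ hξα => ?_⟩
    have hξK : ξ < K := hξα.trans hαK
    refine (h ξ hξK).2.2 α hαK hα0 fun b hb => ?_
    obtain ⟨γ, hγ, hbγ, hγα⟩ := hcl (max b ξ) (max_lt hb hξα)
    exact ⟨γ, hγ.2 ξ ((le_max_right b ξ).trans_lt hbγ),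
      (le_max_left b ξ).trans_lt hbγ, hγα⟩

theorem accIn_subset {C : Set Ordinal} {K : Ordinal} (hC : IsClubIn C K) :
    accIn C K ⊆ C := fun a ha => hC.2.2 a ha.1 ha.2.1 ha.2.2

theorem isClubIn_accIn {K : Ordinal.{0}} (hcof : ℵ₀ < K.cof) {C : Set Ordinal}
    (hC : IsClubIn C K) : IsClubIn (accIn C K) K := by
  set pick : Ordinal → Ordinal := fun x =>
    if hx : x < K then (hC.2.1 x hx).choose else 0 with hpick
  have hpick1 : ∀ x, x < K → pick x ∈ C ∧ x < pick x := by
    intro x hx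
    rw [hpick]; simp only [dif_pos hx]
    obtain ⟨h1, h2⟩ := (hC.2.1 x hx).choose_spec
    exact ⟨h1, h2⟩
  have hKlim : Order.IsSuccLimit K := Ordinal.aleph0_le_cof.1 hcof.le
  set g : Ordinal → Ordinal := fun x => pick x + 1 with hgdef
  have hg : ∀ x, x < K → x < g x ∧ g x < K := by
    intro x hx
    refine ⟨(hpick1 x hx).2.trans (lt_add_one _), ?_⟩
    rw [hgdef]
    simpa [← Ordinal.add_one_eq_succ] using hKlim.succ_lt (hC.1 (hpick1 x hx).1)
  refine ⟨fun a ha => ha.1, ?_, ?_⟩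
  · intro β hβ
    obtain ⟨α, hαK, hβα, hiter, hcofin⟩ := omega_limit hcof g hg hβ
    refine ⟨α, ⟨hαK, ((zero_le (a := β)).trans_lt hβα).ne', fun b hb => ?_⟩, hβα⟩
    obtain ⟨n, hn⟩ := hcofin b hb
    set y := g^[n] β with hy
    have hyK : y < K := (hiter n).trans hαK
    refine ⟨pick y, (hpick1 y hyK).1, hn.trans (hpick1 y hyK).2, ?_⟩
    calc pick y < g y := lt_add_one _
      _ = g^[n + 1] β := (Function.iterate_succ_apply' g n β).symm
      _ < α := hiter (n + 1)
  · intro α hαK hα0 hcl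
    refine ⟨hαK, hα0, fun b hb => ?_⟩
    obtain ⟨γ, hγ, hbγ, hγα⟩ := hcl b hb
    obtain ⟨δ, hδ, hbδ, hδγ⟩ := hγ.2.2 b hbγ
    exact ⟨δ, hδ, hbδ, hδγ.trans hγα⟩

theorem trace_club {K : Ordinal.{0}} {C : Set Ordinal} (hC : IsClubIn C K) {α : Ordinal}
    (hacc : α ∈ accIn C K) (hα : ℵ₀ < α.cof) :
    IsClubIn (accIn C K ∩ Set.Iio α) α := by
  obtain ⟨hαK, hα0, hcofin⟩ := hacc
  set pick : Ordinal → Ordinal := fun x =>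
    if hx : x < α then (hcofin x hx).choose else 0 with hpick
  have hpick1 : ∀ x, x < α → pick x ∈ C ∧ x < pick x ∧ pick x < α := by
    intro x hx
    rw [hpick]; simp only [dif_pos hx]
    obtain ⟨h1, h2, h3⟩ := (hcofin x hx).choose_spec
    exact ⟨h1, h2, h3⟩
  set g : Ordinal → Ordinal := fun x => pick x + 1 with hgdef
  have hαlim : Order.IsSuccLimit α := Ordinal.aleph0_le_cof.1 hα.le
  have hg : ∀ x, x < α → x < g x ∧ g x < α := by
    intro x hx
    refine ⟨(hpick1 x hx).2.1.trans (lt_add_one _), ?_⟩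
    rw [hgdef]
    simpa [← Ordinal.add_one_eq_succ] using hαlim.succ_lt (hpick1 x hx).2.2
  refine ⟨fun x hx => hx.2, ?_, ?_⟩
  · intro b hb
    obtain ⟨α₀, hα₀α, hbα₀, hiter, hcofin₀⟩ := omega_limit hα g hg hb
    refine ⟨α₀, ⟨⟨hα₀α.trans hαK, ((zero_le (a := b)).trans_lt hbα₀).ne', ?_⟩, hα₀α⟩, hbα₀⟩
    intro x hx
    obtain ⟨n, hn⟩ := hcofin₀ x hx
    set y := g^[n] b with hy
    have hyα : y < α := (hiter n).trans hα₀α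
    refine ⟨pick y, (hpick1 y hyα).1, hn.trans (hpick1 y hyα).2.1, ?_⟩
    calc pick y < g y := lt_add_one _
      _ = g^[n + 1] b := (Function.iterate_succ_apply' g n b).symm
      _ < α₀ := hiter (n + 1)
  · intro x hxα hx0 hcl
    refine ⟨⟨hxα.trans hαK, hx0, fun b hb => ?_⟩, hxα⟩
    obtain ⟨γ, hγ, hbγ, hγx⟩ := hcl b hb
    obtain ⟨δ, hδ, hbδ, hδγ⟩ := hγ.1.2.2 b hbγ
    exact ⟨δ, hδ, hbδ, hδγ.trans hγx⟩

theorem stationary_inter {K : Ordinal.{0}} (hcof : ℵ₀ < K.cof) {S C : Set Ordinal}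
    (hS : IsStationaryIn S K) (hC : IsClubIn C K) : IsStationaryIn (S ∩ C) K := by
  intro D hD
  obtain ⟨x, hxS, hxC, hxD⟩ := hS _ (isClubIn_inter hcof hC hD)
  exact ⟨x, ⟨hxS, hxC⟩, hxD⟩

theorem stationary_nonempty {K : Ordinal} (hK : Order.IsSuccLimit K) {S : Set Ordinal}
    (hS : IsStationaryIn S K) : ∃ x ∈ S, x < K := by
  obtain ⟨x, hxS, hxK⟩ := hS _ (isClubIn_Iio hK)
  exact ⟨x, hxS, hxK⟩

theorem fodor {κ : Cardinal.{0}} (hκ : κ.IsRegular) (hκω : ℵ₀ < κ) {T : Set Ordinal}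
    (hTsub : T ⊆ Set.Iio κ.ord) (hT : IsStationaryIn T κ.ord) {f : Ordinal → Ordinal}
    (hf : ∀ α ∈ T, f α < α) :
    ∃ ξ < κ.ord, IsStationaryIn {α | α ∈ T ∧ f α = ξ} κ.ord := by
  by_contra hcon
  push_neg at hcon
  have h1 : ∀ ξ, ξ < κ.ord → ∃ D, IsClubIn D κ.ord ∧
      {α | α ∈ T ∧ f α = ξ} ∩ D = ∅ := by
    intro ξ hξ
    have := hcon ξ hξ
    unfold IsStationaryIn at this
    push_neg at this
    obtain ⟨D, hD, hemp⟩ := this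
    exact ⟨D, hD, hemp⟩
  choose! D hD1 hD2 using h1
  have hdiag := isClubIn_diag hκ hκω (C := D) hD1
  obtain ⟨α, hαT, hαK, hαΔ⟩ := hT _ hdiag
  have hfα : f α < α := hf α hαT
  exact Set.eq_empty_iff_forall_notMem.1 (hD2 (f α) (hfα.trans (hTsub hαT))) α
    ⟨⟨hαT, rfl⟩, hαΔ (f α) hfα⟩



noncomputable def nestRec (G : Ordinal → Ordinal) (i : Ordinal.{0}) : Ordinal.{0} :=
  G (Ordinal.blsub i fun j _ => nestRec G j)
termination_by i
decreasing_by assumption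

theorem endgame {κ : Cardinal.{0}} (hκ : κ.IsRegular) (hκω : ℵ₀ < κ)
    {S T : Set Ordinal} (hTS : T ⊆ S) (hTsub : T ⊆ Set.Iio κ.ord)
    {f : Ordinal → Ordinal} (hf : ∀ α ∈ T, f α < α)
    (hstat : ∀ η < κ.ord, IsStationaryIn {α | α ∈ T ∧ η ≤ f α} κ.ord) :
    ∃ A : Ordinal.{0} → Set Ordinal.{0},
      (∀ i < κ.ord, A i ⊆ S ∧ IsStationaryIn (A i) κ.ord) ∧
      (∀ i j, i < κ.ord → j < κ.ord → i ≠ j → A i ∩ A j = ∅) := by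
  have hKlim : Order.IsSuccLimit κ.ord := Cardinal.isSuccLimit_ord hκ.aleph0_le
  have h1 : ∀ η, η < κ.ord → ∃ ξ, ξ < κ.ord ∧ η ≤ ξ ∧
      IsStationaryIn {α | α ∈ T ∧ η ≤ f α ∧ f α = ξ} κ.ord := by
    intro η hη
    have hsub : {α | α ∈ T ∧ η ≤ f α} ⊆ Set.Iio κ.ord := fun α hα => hTsub hα.1
    obtain ⟨ξ, hξK, hst⟩ := fodor hκ hκω hsub (hstat η hη) (f := f)
      (fun α hα => hf α hα.1)
    have heq : {α | α ∈ {α | α ∈ T ∧ η ≤ f α} ∧ f α = ξ} =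
        {α | α ∈ T ∧ η ≤ f α ∧ f α = ξ} := by
      ext x; simp only [Set.mem_setOf_eq, and_assoc]
    rw [heq] at hst
    obtain ⟨x, ⟨_, hxη, hxξ⟩, _⟩ := stationary_nonempty hKlim hst
    exact ⟨ξ, hξK, hxξ ▸ hxη, hst⟩
  choose! G hG1 hG2 hG3 using h1
  set e : Ordinal → Ordinal := nestRec G with hedef
  set L : Ordinal → Ordinal := fun i => Ordinal.blsub i fun j _ => e j with hLdef
  have he : ∀ i, e i = G (L i) := by
    intro i
    rw [hedef, hLdef]
    conv_lhs => rw [nestRec]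
  have key : ∀ i, i < κ.ord → e i < κ.ord ∧ L i < κ.ord := by
    intro i
    induction i using Ordinal.induction with
    | _ i IH =>
      intro hi
      have hLi : L i < κ.ord := by
        rw [hLdef]
        refine Ordinal.blsub_lt_ord ?_ (fun j hj => (IH j hj (hj.trans hi)).1)
        rw [hκ.cof_eq]; exact Cardinal.lt_ord.1 hi
      exact ⟨by rw [he]; exact hG1 _ hLi, hLi⟩
  have hmono : ∀ i j, j < κ.ord → i < j → e i < e j := by
    intro i j hjK hij
    have h2 : e i < L j := Ordinal.lt_blsub (fun j _ => e j) i hij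
    exact h2.trans_le ((hG2 _ ((key j hjK).2)).trans_eq (he j).symm)
  refine ⟨fun i => {α | α ∈ T ∧ L i ≤ f α ∧ f α = G (L i)}, ?_, ?_⟩
  · intro i hi
    exact ⟨fun α hα => hTS hα.1, hG3 (L i) (key i hi).2⟩
  · intro i j hiK hjK hij
    rw [Set.eq_empty_iff_forall_notMem]
    rintro α ⟨⟨-, -, ha1⟩, ⟨-, -, ha2⟩⟩
    have hne : e i ≠ e j := by
      rcases hij.lt_or_gt with h | h
      · exact (hmono i j hjK h).ne
      · exact (hmono j i hiK h).ne'
    exact hne (by rw [he i, he j, ← ha1, ← ha2])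

theorem nonreflect {κ : Cardinal.{0}} (hκ : κ.IsRegular) (hκω : ℵ₀ < κ)
    {R : Set Ordinal} (hR : IsStationaryIn R κ.ord)
    (hRcof : ∀ α ∈ R, ℵ₀ < α.cof) :
    IsStationaryIn {α | α ∈ R ∧ ∃ c, IsClubIn c α ∧ c ∩ R = ∅} κ.ord := by
  intro C hC
  have hcof : ℵ₀ < κ.ord.cof := by rw [hκ.cof_eq]; exact hκω
  have hacc := isClubIn_accIn hcof hC
  obtain ⟨x, hxR, hxacc⟩ := hR _ hacc
  obtain ⟨α, hαW, hmin⟩ := (@wellFounded_lt Ordinal.{0} _ _).has_min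
    (R ∩ accIn C κ.ord) ⟨x, hxR, hxacc⟩
  refine ⟨α, ⟨hαW.1, accIn C κ.ord ∩ Set.Iio α,
    trace_club hC hαW.2 (hRcof α hαW.1), ?_⟩, accIn_subset hC hαW.2⟩
  rw [Set.eq_empty_iff_forall_notMem]
  rintro y ⟨⟨hyacc, hyα⟩, hyR⟩
  exact hmin y ⟨hyR, hyacc⟩ hyα



theorem caseA {κ : Cardinal.{0}} (hκ : κ.IsRegular) (hκω : ℵ₀ < κ)
    {S R : Set Ordinal} (hRS : R ⊆ S) (hRsub : R ⊆ Set.Iio κ.ord)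
    (hR : IsStationaryIn R κ.ord) (hRcof : ∀ α ∈ R, ℵ₀ < α.cof) :
    ∃ A : Ordinal.{0} → Set Ordinal.{0},
      (∀ i < κ.ord, A i ⊆ S ∧ IsStationaryIn (A i) κ.ord) ∧
      (∀ i j, i < κ.ord → j < κ.ord → i ≠ j → A i ∩ A j = ∅) := by
  have hcof : ℵ₀ < κ.ord.cof := by rw [hκ.cof_eq]; exact hκω
  have hKlim : Order.IsSuccLimit κ.ord := Cardinal.isSuccLimit_ord hκ.aleph0_le
  set T : Set Ordinal := {α | α ∈ R ∧ ∃ c, IsClubIn c α ∧ c ∩ R = ∅} with hTdef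
  have hT : IsStationaryIn T κ.ord := nonreflect hκ hκω hR hRcof
  have hTc : ∀ α, α ∈ T → ∃ c, IsClubIn c α ∧ c ∩ R = ∅ := fun α hα => hα.2
  choose! c hc1 hc2 using hTc
  set a : Ordinal → Ordinal → Ordinal := fun α ξ => sInf (c α ∩ Set.Ioi ξ) with hadef
  have ha : ∀ α ∈ T, ∀ ξ < α, a α ξ ∈ c α ∧ ξ < a α ξ ∧ a α ξ < α := by
    intro α hα ξ hξ
    have hne : (c α ∩ Set.Ioi ξ).Nonempty := by
      obtain ⟨γ, hγ, hξγ⟩ := (hc1 α hα).2.1 ξ hξ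
      exact ⟨γ, hγ, hξγ⟩
    have hmem := csInf_mem hne
    exact ⟨hmem.1, hmem.2, (hc1 α hα).1 hmem.1⟩
  have claim : ∃ ξ < κ.ord, ∀ η < κ.ord,
      IsStationaryIn {α | (α ∈ T ∧ ξ < α) ∧ η ≤ a α ξ} κ.ord := by
    by_contra hcon
    push_neg at hcon
    have h1 : ∀ ξ, ξ < κ.ord → ∃ η, η < κ.ord ∧ ∃ D, IsClubIn D κ.ord ∧
        ∀ α ∈ T, α ∈ D → ξ < α → a α ξ < η := by
      intro ξ hξ
      obtain ⟨η, hη, hns⟩ := hcon ξ hξ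
      unfold IsStationaryIn at hns
      push_neg at hns
      obtain ⟨D, hD, hemp⟩ := hns
      refine ⟨η, hη, D, hD, fun α hαT hαD hξα => ?_⟩
      by_contra hcon2
      push_neg at hcon2
      exact Set.eq_empty_iff_forall_notMem.1 hemp α ⟨⟨⟨hαT, hξα⟩, hcon2⟩, hαD⟩
    choose! η hη D hD hprop using h1
    have hD1 := isClubIn_diag hκ hκω (C := D) hD
    have hD2 := isClubIn_diag hκ hκω (C := fun ξ => Set.Ioi (η ξ) ∩ Set.Iio κ.ord)
      (fun ξ hξ => isClubIn_Ioi_Iio hKlim (hη ξ hξ))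
    have hD3 := isClubIn_lim hκ hκω
    set Dset : Set Ordinal :=
      ({α | α < κ.ord ∧ ∀ ξ < α, α ∈ D ξ} ∩
        {α | α < κ.ord ∧ ∀ ξ < α, α ∈ Set.Ioi (η ξ) ∩ Set.Iio κ.ord}) ∩
      ({a | Order.IsSuccLimit a} ∩ Set.Iio κ.ord) with hDset
    have hDc : IsClubIn Dset κ.ord :=
      isClubIn_inter hcof (isClubIn_inter hcof hD1 hD2) hD3
    set E := accIn Dset κ.ord with hE
    have hEclub := isClubIn_accIn hcof hDc
    have hEsub : E ⊆ Dset := accIn_subset hDc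
    obtain ⟨α, hαT, hαE⟩ := hT E hEclub
    have hαK : α < κ.ord := hRsub hαT.1
    obtain ⟨α', hα'T, hα'E, hαα'⟩ : ∃ α' ∈ T, α' ∈ E ∧ α < α' := by
      obtain ⟨α', hα'T, h2⟩ := hT (E ∩ (Set.Ioi α ∩ Set.Iio κ.ord))
        (isClubIn_inter hcof hEclub (isClubIn_Ioi_Iio hKlim hαK))
      exact ⟨α', hα'T, h2.1, h2.2.1⟩
    have hα'K : α' < κ.ord := hRsub hα'T.1
    have hα'D : α' ∈ Dset := hEsub hα'E
    -- every element of Dset below α' is in the club c α'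
    have hsub : ∀ β ∈ Dset, β < α' → β ∈ c α' := by
      intro β hβD hβα'
      have hβlim : Order.IsSuccLimit β := hβD.2.1
      refine (hc1 α' hα'T).2.2 β hβα' hβlim.pos.ne' ?_
      intro x hxβ
      have hxα' : x < α' := hxβ.trans hβα'
      have hxK : x < κ.ord := hxα'.trans hα'K
      have hα'Dx : α' ∈ D x := hα'D.1.1.2 x hxα'
      have h5 : a α' x < η x := hprop x hxK α' hα'T hα'Dx hxα'
      have h6 : η x < β := (hβD.1.2.2 x hxβ).1
      obtain ⟨hm1, hm2, _⟩ := ha α' hα'T x hxα'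
      exact ⟨a α' x, hm1, hm2, h5.trans h6⟩
    have hαlim : Order.IsSuccLimit α := Ordinal.aleph0_le_cof.1 (hRcof α hαT.1).le
    have hαmem : α ∈ c α' := by
      refine (hc1 α' hα'T).2.2 α hαα' hαlim.pos.ne' ?_
      intro x hxα
      obtain ⟨γ, hγD, hxγ, hγα⟩ := hαE.2.2 x hxα
      exact ⟨γ, hsub γ hγD (hγα.trans hαα'), hxγ, hγα⟩
    exact Set.eq_empty_iff_forall_notMem.1 (hc2 α' hα'T) α ⟨hαmem, hαT.1⟩
  obtain ⟨ξ, hξK, hstat⟩ := claim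
  refine endgame hκ hκω (S := S) (T := {α | α ∈ T ∧ ξ < α})
    (f := fun α => a α ξ) ?_ ?_ ?_ ?_
  · exact fun α hα => hRS hα.1.1
  · exact fun α hα => hRsub hα.1.1
  · exact fun α hα => (ha α hα.1 ξ hα.2).2.2
  · exact fun η hη => hstat η hη

theorem caseB {κ : Cardinal.{0}} (hκ : κ.IsRegular) (hκω : ℵ₀ < κ)
    {S R : Set Ordinal} (hRS : R ⊆ S) (hRsub : R ⊆ Set.Iio κ.ord)
    (hR : IsStationaryIn R κ.ord)
    (hRcof : ∀ α ∈ R, Order.IsSuccLimit α ∧ α.cof = ℵ₀) :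
    ∃ A : Ordinal.{0} → Set Ordinal.{0},
      (∀ i < κ.ord, A i ⊆ S ∧ IsStationaryIn (A i) κ.ord) ∧
      (∀ i j, i < κ.ord → j < κ.ord → i ≠ j → A i ∩ A j = ∅) := by
  have hcof : ℵ₀ < κ.ord.cof := by rw [hκ.cof_eq]; exact hκω
  have hKlim : Order.IsSuccLimit κ.ord := Cardinal.isSuccLimit_ord hκ.aleph0_le
  have hseq : ∀ α, α ∈ R → ∃ b : ℕ → Ordinal, (∀ n, b n < α) ∧ ∀ x < α, ∃ n, x ≤ b n := by
    intro α hα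
    obtain ⟨ι, f, hlsub, hmk⟩ := Ordinal.exists_lsub_cof α
    rw [(hRcof α hα).2, ← Cardinal.mk_nat] at hmk
    obtain ⟨e⟩ := Cardinal.eq.1 hmk
    refine ⟨f ∘ e.symm, fun n => ?_, fun x hx => ?_⟩
    · exact hlsub ▸ Ordinal.lt_lsub f _
    · rw [← hlsub] at hx
      obtain ⟨i, hi⟩ := Ordinal.lt_lsub_iff.1 hx
      exact ⟨e i, by simpa using hi⟩
  choose! b hb1 hb2 using hseq
  have claim : ∃ n : ℕ, ∀ η < κ.ord,
      IsStationaryIn {α | α ∈ R ∧ η ≤ b α n} κ.ord := by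
    by_contra hcon
    push_neg at hcon
    have h1 : ∀ n : ℕ, ∃ η, η < κ.ord ∧ ∃ D, IsClubIn D κ.ord ∧
        ∀ α ∈ R, α ∈ D → b α n < η := by
      intro n
      obtain ⟨η, hη, hns⟩ := hcon n
      unfold IsStationaryIn at hns
      push_neg at hns
      obtain ⟨D, hD, hemp⟩ := hns
      refine ⟨η, hη, D, hD, fun α hαR hαD => ?_⟩
      by_contra hcon2
      push_neg at hcon2
      exact Set.eq_empty_iff_forall_notMem.1 hemp α ⟨⟨hαR, hcon2⟩, hαD⟩
    choose η hη D hD hprop using h1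
    have hηsup : (⨆ n, η n) < κ.ord :=
      Ordinal.iSup_lt_ord (by rw [Cardinal.mk_nat]; exact hcof) hη
    have hDc : IsClubIn ((⋂ n, D n) ∩ (Set.Ioi (⨆ n, η n) ∩ Set.Iio κ.ord)) κ.ord := by
      refine isClubIn_inter hcof ?_ (isClubIn_Ioi_Iio hKlim hηsup)
      exact isClubIn_iInter (by rw [Cardinal.mk_nat]; exact hcof) hcof hD
    obtain ⟨α, hαR, hαD, hαIoi, _⟩ := hR _ hDc
    have hαlim : Order.IsSuccLimit α := (hRcof α hαR).1
    have hsucc : Order.succ (⨆ n, η n) < α := hαlim.succ_lt hαIoi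
    obtain ⟨n, hn⟩ := hb2 α hαR _ hsucc
    have h2 : b α n < η n := hprop n α hαR (Set.mem_iInter.1 hαD n)
    have h3 : η n ≤ ⨆ m, η m := Ordinal.le_iSup _ n
    have : Order.succ (⨆ m, η m) ≤ ⨆ m, η m := hn.trans (h2.le.trans h3)
    exact absurd this (by simp)
  obtain ⟨n, hstat⟩ := claim
  exact endgame hκ hκω (S := S) (T := R) (f := fun α => b α n) hRS hRsub
    (fun α hα => hb1 α hα n) (fun η hη => hstat η hη)



end

end Solovay

/-- `S^θ_κ`, the set of ordinals below `κ` of cofinality `θ`. -/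
def cofSet (κ θ : Cardinal) : Set Ordinal :=
  {α | α < κ.ord ∧ α.cof = θ}

/-- Solovay splitting: every stationary subset of a regular
uncountable `κ` splits into `κ` pairwise disjoint stationary subsets. -/
theorem solovay_splitting (κ : Cardinal.{0}) (hκ : κ.IsRegular)
    (hκω : Cardinal.aleph0 < κ)
    (S : Set Ordinal.{0}) (hSsub : S ⊆ Set.Iio κ.ord) (hSstat : IsStationaryIn S κ.ord) :
    ∃ A : Ordinal.{0} → Set Ordinal.{0},
      (∀ i < κ.ord, A i ⊆ S ∧ IsStationaryIn (A i) κ.ord) ∧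
      (∀ i j, i < κ.ord → j < κ.ord → i ≠ j → A i ∩ A j = ∅) := by
  have hcof : ℵ₀ < κ.ord.cof := by rw [hκ.cof_eq]; exact hκω
  have hKlim : Order.IsSuccLimit κ.ord := Cardinal.isSuccLimit_ord hκ.aleph0_le
  set R2 : Set Ordinal := {α | α ∈ S ∧ ℵ₀ < α.cof} with hR2
  by_cases h2 : IsStationaryIn R2 κ.ord
  · exact Solovay.caseA hκ hκω (fun α hα => hα.1) (fun α hα => hSsub hα.1) h2
      (fun α hα => hα.2)
  · unfold IsStationaryIn at h2
    push_neg at h2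
    obtain ⟨C2, hC2, hemp⟩ := h2
    set R1 : Set Ordinal := {α | α ∈ S ∧ Order.IsSuccLimit α ∧ α.cof = ℵ₀} with hR1
    have hR1stat : IsStationaryIn R1 κ.ord := by
      intro C hC
      have hclub : IsClubIn ((C ∩ C2) ∩ ({a | Order.IsSuccLimit a} ∩ Set.Iio κ.ord)) κ.ord :=
        Solovay.isClubIn_inter hcof (Solovay.isClubIn_inter hcof hC hC2)
          (Solovay.isClubIn_lim hκ hκω)
      obtain ⟨α, hαS, ⟨hαC, hαC2⟩, hαlim, _⟩ := hSstat _ hclub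
      have hge : ℵ₀ ≤ α.cof := Ordinal.aleph0_le_cof.2 hαlim
      rcases hge.lt_or_eq with hlt | heq
      · exact absurd (Set.eq_empty_iff_forall_notMem.1 hemp α) fun h =>
          h ⟨⟨hαS, hlt⟩, hαC2⟩
      · exact ⟨α, ⟨hαS, hαlim, heq.symm⟩, hαC⟩
    exact Solovay.caseB hκ hκω (fun α hα => hα.1) (fun α hα => hSsub hα.1) hR1stat
      (fun α hα => hα.2)
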